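/- For every x ∈ ℝ and every h > 0, |∫_ℝ K(z) F(x − h z) dz − F(x)| ≤ (L/2) · h² · ∫_ℝ z² K(z) dz. (Hence the bias of the naive kernel distribution estimator F̂ is O(h²) at points where the density is smooth.) -/

import Mathlib

open MeasureTheory Filter Topology

private lemma taylor2_le (F f : ℝ → ℝ) (L : ℝ) (hL : 0 ≤ L)
    (hF : ∀ x, HasDerivAt F (f x) x)
    (hLip : ∀ a b : ℝ, |f a - f b| ≤ L * |a - b|) (a b : ℝ) (hab : a ≤ b) :
    |F b - F a - f a * (b - a)| ≤ L / 2 * (b - a) ^ 2 := by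
  have hfc : Continuous f := by
    have : LipschitzWith (Real.toNNReal L) f := by
      rw [lipschitzWith_iff_dist_le_mul]
      intro p q
      rw [Real.dist_eq, Real.dist_eq, Real.coe_toNNReal L hL]
      exact hLip p q
    exact this.continuous
  have hFi : F b - F a = ∫ t in a..b, f t :=
    (intervalIntegral.integral_eq_sub_of_hasDerivAt (fun t _ => hF t)
      (hfc.intervalIntegrable a b)).symm
  have h1 : F b - F a - f a * (b - a) = ∫ t in a..b, (f t - f a) := by
    rw [intervalIntegral.integral_sub (hfc.intervalIntegrable a b)
      intervalIntegrable_const, intervalIntegral.integral_const, ← hFi,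
      smul_eq_mul]
    ring
  have hgi : IntervalIntegrable (fun t => L * |t - a|) volume a b :=
    (Continuous.intervalIntegrable (by continuity) a b)
  have h2 := intervalIntegral.norm_integral_le_abs_of_norm_le (μ := volume) (a := a) (b := b)
      (f := fun t => f t - f a) (g := fun t => L * |t - a|)
      (Filter.Eventually.of_forall fun t => by
        simpa [Real.norm_eq_abs, abs_sub_comm] using hLip t a) hgi
  have h3 : (∫ t in a..b, L * |t - a|) = L / 2 * (b - a) ^ 2 := by
    have e : (∫ t in a..b, L * |t - a|) = ∫ t in a..b, L * (t - a) := by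
      apply intervalIntegral.integral_congr
      intro t ht
      rw [Set.uIcc_of_le hab] at ht
      show L * |t - a| = L * (t - a)
      rw [abs_of_nonneg (by linarith [ht.1])]
    have e2 : (∫ t in a..b, (t - a)) = (b - a) ^ 2 / 2 := by
      rw [intervalIntegral.integral_comp_sub_right (fun t => t) a, integral_id]
      ring
    rw [e, intervalIntegral.integral_const_mul, e2]
    ring
  rw [h1]
  calc |∫ t in a..b, (f t - f a)| ≤ |L / 2 * (b - a) ^ 2| := by rw [← h3]; exact h2
    _ = L / 2 * (b - a) ^ 2 := abs_of_nonneg (by positivity)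

private lemma taylor2 (F f : ℝ → ℝ) (L : ℝ) (hL : 0 ≤ L)
    (hF : ∀ x, HasDerivAt F (f x) x)
    (hLip : ∀ a b : ℝ, |f a - f b| ≤ L * |a - b|) (a b : ℝ) :
    |F b - F a - f a * (b - a)| ≤ L / 2 * (b - a) ^ 2 := by
  rcases le_total a b with hab | hba
  · exact taylor2_le F f L hL hF hLip a b hab
  · -- reflect: G t = F (-t), with derivative -f(-t)
    have hG : ∀ x, HasDerivAt (fun t => F (-t)) (-f (-x)) x := by
      intro x
      simpa [Function.comp_def] using (hF (-x)).comp x (hasDerivAt_neg x)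
    have hGLip : ∀ p q : ℝ, |(-f (-p)) - (-f (-q))| ≤ L * |p - q| := by
      intro p q
      have := hLip (-q) (-p)
      have h1 : (-f (-p)) - (-f (-q)) = f (-q) - f (-p) := by ring
      have h2 : |(-q : ℝ) - (-p)| = |p - q| := by
        rw [show (-q : ℝ) - (-p) = -(q - p) by ring, abs_neg, abs_sub_comm]
      rw [h1]; rw [h2] at this; exact this
    have := taylor2_le (fun t => F (-t)) (fun t => -f (-t)) L hL hG hGLip (-a) (-b)
      (by linarith)
    simp only [neg_neg] at this
    have e1 : F b - F a - (-f a) * (-b - -a) = F b - F a - f a * (b - a) := by ring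
    have e2 : L / 2 * (-b - -a) ^ 2 = L / 2 * (b - a) ^ 2 := by ring
    rw [e1, e2] at this
    exact this

theorem naive_distribution_interior_bias
    (K F f : ℝ → ℝ) (L : ℝ)
    (hK0 : ∀ z, 0 ≤ K z) (hKint : Integrable K)
    (hK1 : (∫ z, K z) = 1) (hKsymm : ∀ z, K (-z) = K z)
    (hKmom2 : Integrable (fun z => z ^ 2 * K z))
    (hF : ∀ x, HasDerivAt F (f x) x)
    (hL : 0 ≤ L)
    (hLip : ∀ a b : ℝ, |f a - f b| ≤ L * |a - b|) :
    ∀ (x h : ℝ), 0 < h →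
      |(∫ z, K z * F (x - h * z)) - F x| ≤ L / 2 * h ^ 2 * ∫ z, z ^ 2 * K z := by
  intro x h hpos
  have hFdiff : Differentiable ℝ F := fun y => (hF y).differentiableAt
  have hFc : Continuous F := hFdiff.continuous
  set c := f x with hc
  -- pointwise Taylor bound
  have hpt : ∀ z : ℝ, |F (x - h * z) - F x + h * z * c| ≤ L / 2 * h ^ 2 * z ^ 2 := by
    intro z
    have := taylor2 F f L hL hF hLip x (x - h * z)
    have e1 : F (x - h * z) - F x - f x * (x - h * z - x) = F (x - h * z) - F x + h * z * c := by
      rw [hc]; ring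
    have e2 : L / 2 * (x - h * z - x) ^ 2 = L / 2 * h ^ 2 * z ^ 2 := by ring
    rw [e1, e2] at this
    exact this
  -- integrability facts
  have mK : AEStronglyMeasurable K volume := hKint.1
  have hzK : Integrable (fun z => z * K z) := by
    refine Integrable.mono (hKint.add hKmom2) ?_ ?_
    · exact (aestronglyMeasurable_id.mul mK)
    · filter_upwards with z
      have h1 : ‖z * K z‖ = |z| * K z := by
        rw [norm_mul, Real.norm_eq_abs, Real.norm_eq_abs, abs_of_nonneg (hK0 z)]
      have h2 : ‖K z + z ^ 2 * K z‖ = K z + z ^ 2 * K z := by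
        rw [Real.norm_eq_abs, abs_of_nonneg (by nlinarith [hK0 z, sq_nonneg z])]
      simp only [Pi.add_apply]
      rw [h1, h2]
      nlinarith [sq_nonneg (|z| - 1), hK0 z, sq_abs z, abs_nonneg z]
  have hG : Integrable (fun z => K z * (F (x - h * z) - F x + h * z * c)) := by
    refine Integrable.mono (hKmom2.const_mul (L / 2 * h ^ 2)) ?_ ?_
    · exact mK.mul ((hFc.comp (by continuity)).sub continuous_const |>.add
        (by continuity)).aestronglyMeasurable
    · filter_upwards with z
      have h1 : ‖K z * (F (x - h * z) - F x + h * z * c)‖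
          = K z * |F (x - h * z) - F x + h * z * c| := by
        rw [norm_mul, Real.norm_eq_abs, Real.norm_eq_abs, abs_of_nonneg (hK0 z)]
      have h2 : ‖L / 2 * h ^ 2 * (z ^ 2 * K z)‖ = L / 2 * h ^ 2 * (z ^ 2 * K z) := by
        rw [Real.norm_eq_abs, abs_of_nonneg (mul_nonneg (mul_nonneg (by linarith)
          (sq_nonneg h)) (mul_nonneg (sq_nonneg z) (hK0 z)))]
      rw [h1, h2]
      calc K z * |F (x - h * z) - F x + h * z * c|
          ≤ K z * (L / 2 * h ^ 2 * z ^ 2) := by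
            exact mul_le_mul_of_nonneg_left (hpt z) (hK0 z)
        _ = L / 2 * h ^ 2 * (z ^ 2 * K z) := by ring
  have hKF : Integrable (fun z => K z * F (x - h * z)) := by
    have : (fun z => K z * F (x - h * z))
        = fun z => K z * F x + (K z * (F (x - h * z) - F x + h * z * c)
            - c * h * (z * K z)) := by
      funext z; ring
    rw [this]
    exact (hKint.mul_const (F x)).add (hG.sub ((hzK.const_mul (c * h))))
  -- odd integral vanishes
  have hodd : (∫ z, z * K z) = 0 := by
    have h1 : (∫ z, (-z) * K (-z)) = ∫ z, z * K z :=
      integral_neg_eq_self (fun z => z * K z) volume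
    have h2 : (∫ z, (-z) * K (-z)) = - ∫ z, z * K z := by
      simp_rw [hKsymm, neg_mul]
      exact integral_neg _
    linarith [h1, h2]
  -- split the integral
  have hsplit : (∫ z, K z * F (x - h * z))
      = F x + (∫ z, K z * (F (x - h * z) - F x + h * z * c)) - c * h * ∫ z, z * K z := by
    have e : (fun z => K z * F (x - h * z))
        = fun z => K z * F x + (K z * (F (x - h * z) - F x + h * z * c)
            - c * h * (z * K z)) := by
      funext z; ring
    have hG2 : Integrable (fun z => K z * (F (x - h * z) - F x + h * z * c)
        - c * h * (z * K z)) := hG.sub (hzK.const_mul (c * h))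
    rw [e, integral_add (hKint.mul_const (F x)) hG2,
      integral_sub hG (hzK.const_mul (c * h)), integral_mul_const,
      integral_const_mul, hK1]
    ring
  rw [hsplit, hodd]
  have e3 : F x + (∫ z, K z * (F (x - h * z) - F x + h * z * c)) - c * h * 0 - F x
      = ∫ z, K z * (F (x - h * z) - F x + h * z * c) := by ring
  rw [e3]
  calc |∫ z, K z * (F (x - h * z) - F x + h * z * c)|
      ≤ ∫ z, |K z * (F (x - h * z) - F x + h * z * c)| := by
        exact norm_integral_le_integral_norm
          (μ := volume) (fun z => K z * (F (x - h * z) - F x + h * z * c))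
    _ ≤ ∫ z, L / 2 * h ^ 2 * (z ^ 2 * K z) := by
        refine integral_mono hG.abs (hKmom2.const_mul _) ?_
        intro z
        show |K z * (F (x - h * z) - F x + h * z * c)| ≤ L / 2 * h ^ 2 * (z ^ 2 * K z)
        rw [abs_mul, abs_of_nonneg (hK0 z)]
        calc K z * |F (x - h * z) - F x + h * z * c|
            ≤ K z * (L / 2 * h ^ 2 * z ^ 2) :=
              mul_le_mul_of_nonneg_left (hpt z) (hK0 z)
          _ = L / 2 * h ^ 2 * (z ^ 2 * K z) := by ring
    _ = L / 2 * h ^ 2 * ∫ z, z ^ 2 * K z := integral_const_mul _ _
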